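/- With the attribute setup below, assume l ≥ 2, the family v is pairwise orthogonal, and all vectors v(i,j) have the same norm c > 0. Then for any two distinct indices i ≠ i' in {1,…,l}, the cosine similarity between the centered representations of two base concepts from the same attribute equals S_cos(u_i, u_{i'}) = −1/(l−1). -/

import Mathlib

open scoped InnerProductSpace
open Finset

/-- Cosine similarity of vectors in `ℝ^d`. -/
noncomputable def Scos {d : ℕ} (x y : EuclideanSpace ℝ (Fin d)) : ℝ :=
  ⟪x, y⟫_ℝ / (‖x‖ * ‖y‖)

theorem stmt_8
    {d l l' : ℕ} (hd : 1 ≤ d) (hl : 1 ≤ l) (hl' : 1 ≤ l')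
    (σ : ℝ) (hσ : 0 < σ)
    (v : Fin l → Fin l' → EuclideanSpace ℝ (Fin d))
    (vhat : Fin l → EuclideanSpace ℝ (Fin d))
    (vhat' : Fin l' → EuclideanSpace ℝ (Fin d))
    (μ : EuclideanSpace ℝ (Fin d))
    (u : Fin l → EuclideanSpace ℝ (Fin d))
    (u' : Fin l' → EuclideanSpace ℝ (Fin d))
    (hvhat : ∀ i, vhat i = (1 / (l' : ℝ)) • ∑ j, v i j)
    (hvhat' : ∀ j, vhat' j = (1 / (l : ℝ)) • ∑ i, v i j)
    (hμ : μ = (1 / ((l : ℝ) * (l' : ℝ))) • ∑ i, ∑ j, v i j)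
    (hu : ∀ i, u i = (1 / σ) • (vhat i - μ))
    (hu' : ∀ j, u' j = (1 / σ) • (vhat' j - μ))
    (hl2 : 2 ≤ l)
    (horth : ∀ i j i' j', (i, j) ≠ (i', j') → ⟪v i j, v i' j'⟫_ℝ = 0)
    (c : ℝ) (hcpos : 0 < c) (hc : ∀ i j, ‖v i j‖ = c)
    : ∀ i i', i ≠ i' → Scos (u i) (u i') = -1 / ((l : ℝ) - 1) := by
  have hl0 : ((l : ℝ)) ≠ 0 := by positivity
  have hl'0 : ((l' : ℝ)) ≠ 0 := Nat.cast_ne_zero.mpr (by omega)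
  have hσ0 : σ ≠ 0 := hσ.ne'
  have hc0 : c ≠ 0 := hcpos.ne'
  have hl2R : (2 : ℝ) ≤ (l : ℝ) := by exact_mod_cast hl2
  have hlm1 : ((l : ℝ) - 1) ≠ 0 := by linarith
  -- inner products of row sums
  have hw : ∀ i i' : Fin l, ⟪∑ j, v i j, ∑ j, v i' j⟫_ℝ =
      (if i = i' then (l' : ℝ) * c ^ 2 else 0) := by
    intro i i'
    rw [sum_inner]
    by_cases h : i = i'
    · subst h
      simp only [if_pos rfl]
      have key : ∀ j : Fin l', ⟪v i j, ∑ j', v i j'⟫_ℝ = c ^ 2 := by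
        intro j
        rw [inner_sum, Finset.sum_eq_single j]
        · rw [real_inner_self_eq_norm_sq, hc]
        · intro b _ hb
          exact horth i j i b (by simp [hb.symm])
        · intro h; exact absurd (mem_univ j) h
      rw [Finset.sum_congr rfl fun j _ => key j]
      simp [Finset.card_univ, mul_comm]
    · simp only [if_neg h]
      apply Finset.sum_eq_zero
      intro j _
      rw [inner_sum]
      apply Finset.sum_eq_zero
      intro j' _
      exact horth i j i' j' (by simp [h])
  have hwS : ∀ i : Fin l, ⟪∑ j, v i j, ∑ a, ∑ j, v a j⟫_ℝ = (l' : ℝ) * c ^ 2 := by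
    intro i
    rw [inner_sum, Finset.sum_congr rfl fun a _ => hw i a]
    simp
  have hSw : ∀ i : Fin l, ⟪∑ a, ∑ j, v a j, ∑ j, v i j⟫_ℝ = (l' : ℝ) * c ^ 2 := by
    intro i
    rw [sum_inner, Finset.sum_congr rfl fun a _ => hw a i]
    simp
  have hSS : ⟪∑ a, ∑ j, v a j, (∑ a, ∑ j, v a j : EuclideanSpace ℝ (Fin d))⟫_ℝ =
      (l : ℝ) * ((l' : ℝ) * c ^ 2) := by
    rw [sum_inner, Finset.sum_congr rfl fun a _ => hwS a]
    simp [Finset.card_univ, mul_comm]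
  have huu : ∀ i i' : Fin l, ⟪u i, u i'⟫_ℝ =
      (if i = i' then ((l : ℝ) - 1) else -1) * c ^ 2 / (σ ^ 2 * (l : ℝ) * (l' : ℝ)) := by
    intro i i'
    rw [hu i, hu i', hvhat i, hvhat i', hμ]
    simp only [inner_sub_left, inner_sub_right, real_inner_smul_left, real_inner_smul_right]
    rw [hw i i', hwS i, hSw i', hSS]
    by_cases h : i = i' <;> simp only [h, if_pos, if_neg, if_true, if_false] <;>
      field_simp <;> ring
  intro i i' hne
  have hni : ‖u i‖ ^ 2 = ((l : ℝ) - 1) * c ^ 2 / (σ ^ 2 * (l : ℝ) * (l' : ℝ)) := by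
    rw [← real_inner_self_eq_norm_sq, huu i i]; simp
  have hni' : ‖u i'‖ ^ 2 = ((l : ℝ) - 1) * c ^ 2 / (σ ^ 2 * (l : ℝ) * (l' : ℝ)) := by
    rw [← real_inner_self_eq_norm_sq, huu i' i']; simp
  have hxy : ‖u i‖ = ‖u i'‖ := by
    rw [← Real.sqrt_sq (norm_nonneg (u i)), ← Real.sqrt_sq (norm_nonneg (u i')), hni, hni']
  have hprod : ‖u i‖ * ‖u i'‖ = ((l : ℝ) - 1) * c ^ 2 / (σ ^ 2 * (l : ℝ) * (l' : ℝ)) := by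
    rw [hxy, ← sq, hni']
  rw [Scos, huu i i', if_neg hne, hprod]
  field_simp
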